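/- Let H be a finite undirected labelled graph of dimension 3 satisfying conditions φ₁, φ₂, φ₃, and φ₄. Let V' be the set of P₁-nodes of H and let E' ⊆ V'×V' be defined by E'(u,z) if and only if there is a gadgetised edge from u to z in H. Then E' is a strict linear order on V', and H is isomorphic to gad(V',E'). -/

import Mathlib

/-- A strict linear order on a type `V`: an irreflexive, transitive and total
binary relation. -/
def IsStrictLinearOrderRel {V : Type} (E : V → V → Prop) : Prop :=
  (∀ v, ¬ E v v) ∧ (∀ u v w, E u v → E v w → E u w) ∧ (∀ u v : V, u ≠ v → E u v ∨ E v u)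

/-- Vertices of the gadgetisation of a directed graph `(V, E)`: a node `v¹_u` for every
`u : V` (left summand) and, for every edge `e` of `E`, a node `v²_e` (right summand with
second component `false`) and a node `v³_e` (second component `true`). -/
def GadV {V : Type} (E : V → V → Prop) : Type :=
  V ⊕ ({p : V × V // E p.1 p.2} × Bool)

/-- The (symmetric) adjacency relation of the gadgetisation: every edge `(u,w)` of the
original graph is replaced by the undirected path `v¹_u — v²_{(u,w)} — v³_{(u,w)} — v¹_w`. -/
def gadAdj {V : Type} (E : V → V → Prop) : GadV E → GadV E → Prop
  | Sum.inl u, Sum.inr (e, b) => (b = false ∧ e.val.1 = u) ∨ (b = true ∧ e.val.2 = u)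
  | Sum.inr (e, b), Sum.inl u => (b = false ∧ e.val.1 = u) ∨ (b = true ∧ e.val.2 = u)
  | Sum.inr (e, b), Sum.inr (e', b') => e = e' ∧ b ≠ b'
  | Sum.inl _, Sum.inl _ => False

/-- The labelling of the gadgetisation: `v¹`-nodes get label `(1,0,0)`, `v²`-nodes get
`(0,1,0)` and `v³`-nodes get `(0,0,1)`. -/
def gadLab {V : Type} (E : V → V → Prop) : GadV E → Fin 3 → Bool
  | Sum.inl _ => fun i => decide (i = 0)
  | Sum.inr (_, false) => fun i => decide (i = 1)
  | Sum.inr (_, true) => fun i => decide (i = 2)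

noncomputable instance GadV.fintype {V : Type} [Fintype V] (E : V → V → Prop) :
    Fintype (GadV E) := by
  classical
  unfold GadV
  infer_instance

/-- An isomorphism of labelled graphs: an edge-preserving and label-preserving bijection. -/
def IsoLabGraph {V₁ V₂ : Type} {d : ℕ} (E₁ : V₁ → V₁ → Prop) (lab₁ : V₁ → Fin d → Bool)
    (E₂ : V₂ → V₂ → Prop) (lab₂ : V₂ → Fin d → Bool) : Prop :=
  ∃ f : V₁ ≃ V₂, (∀ u v, E₁ u v ↔ E₂ (f u) (f v)) ∧ ∀ v, lab₁ v = lab₂ (f v)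

/-- `(W, EH, labH)` is isomorphic to the gadgetisation of some (finite) strict linear
order. -/
def IsGadLin {W : Type} (EH : W → W → Prop) (labH : W → Fin 3 → Bool) : Prop :=
  ∃ (U : Type) (_ : Fintype U) (R : U → U → Prop),
    IsStrictLinearOrderRel R ∧ IsoLabGraph EH labH (gadAdj R) (gadLab R)

/-- A gadgetised path from `u` to `z` via `w` (a `P₂` node) and `v` (a `P₃` node). -/
def GadPath {V : Type} (E : V → V → Prop) (lab : V → Fin 3 → Bool) (u w v z : V) : Prop :=
  lab u 0 = true ∧ lab w 1 = true ∧ lab v 2 = true ∧ lab z 0 = true ∧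
    E u w ∧ E w v ∧ E v z

/-- There is a gadgetised edge from `u` to `z`. -/
def GadEdge {V : Type} (E : V → V → Prop) (lab : V → Fin 3 → Bool) (u z : V) : Prop :=
  ∃ w v, GadPath E lab u w v z

/-- Condition φ₁: every node satisfies exactly one of `P₁, P₂, P₃`. -/
def phi1 {V : Type} (lab : V → Fin 3 → Bool) : Prop :=
  ∀ v : V,
    (lab v 0 = true ∧ lab v 1 = false ∧ lab v 2 = false) ∨
    (lab v 0 = false ∧ lab v 1 = true ∧ lab v 2 = false) ∨
    (lab v 0 = false ∧ lab v 1 = false ∧ lab v 2 = true)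

/-- Condition φ₂: every `P₂`-node has exactly two neighbours, exactly one of them a
`P₁`-node and exactly one a `P₃`-node; every `P₃`-node has exactly two neighbours, exactly
one a `P₁`-node and exactly one a `P₂`-node; and no two `P₁`-nodes are adjacent. -/
def phi2 {V : Type} [Fintype V] (E : V → V → Prop) (lab : V → Fin 3 → Bool) : Prop :=
  (∀ v : V, lab v 1 = true →
    Nat.card {w | E v w} = 2 ∧ Nat.card {w | E v w ∧ lab w 0 = true} = 1 ∧
      Nat.card {w | E v w ∧ lab w 2 = true} = 1) ∧
  (∀ v : V, lab v 2 = true →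
    Nat.card {w | E v w} = 2 ∧ Nat.card {w | E v w ∧ lab w 0 = true} = 1 ∧
      Nat.card {w | E v w ∧ lab w 1 = true} = 1) ∧
  (∀ u v : V, lab u 0 = true → lab v 0 = true → ¬ E u v)

/-- Condition φ₃: between any two distinct `P₁`-nodes there is exactly one gadgetised edge
in total (from `u` to `z` or from `z` to `u`). -/
def phi3 {V : Type} [Fintype V] (E : V → V → Prop) (lab : V → Fin 3 → Bool) : Prop :=
  ∀ u z : V, lab u 0 = true → lab z 0 = true → u ≠ z →
    Nat.card {p : V × V | GadPath E lab u p.1 p.2 z} +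
      Nat.card {p : V × V | GadPath E lab z p.1 p.2 u} = 1

/-- Condition φ₄: there is no triangle of gadgetised edges. -/
def phi4 {V : Type} (E : V → V → Prop) (lab : V → Fin 3 → Bool) : Prop :=
  ¬ ∃ u v w : V, GadEdge E lab u v ∧ GadEdge E lab v w ∧ GadEdge E lab w u

/-- `N₂ u`: the number of neighbours of `u` satisfying `P₂`. -/
noncomputable def N2 {V : Type} [Fintype V] (E : V → V → Prop) (lab : V → Fin 3 → Bool)
    (u : V) : ℕ :=
  Nat.card {w | E u w ∧ lab w 1 = true}

/-- Condition ψ: for all `0 ≤ i < j < |P₁|` there are `P₁`-nodes `u, w` with `N₂ u = j`,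
`N₂ w = i` and a gadgetised edge from `u` to `w`. -/
def psiCond {V : Type} [Fintype V] (E : V → V → Prop) (lab : V → Fin 3 → Bool) : Prop :=
  ∀ i j : ℕ, i < j → j < Nat.card {v : V | lab v 0 = true} →
    ∃ u w : V, lab u 0 = true ∧ lab w 0 = true ∧
      N2 E lab u = j ∧ N2 E lab w = i ∧ GadEdge E lab u w


section StmtTenHelpers

lemma card_one_unique {α : Type} [Finite α] {S : Set α} (h : Nat.card S = 1) :
    ∃ a ∈ S, ∀ b ∈ S, b = a := by
  rw [Nat.card_eq_one_iff_exists] at h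
  obtain ⟨⟨a, ha⟩, hu⟩ := h
  exact ⟨a, ha, fun b hb => congrArg Subtype.val (hu ⟨b, hb⟩)⟩

lemma card_pos_of_mem {α : Type} [Finite α] {S : Set α} {a : α} (h : a ∈ S) :
    0 < Nat.card S := @Nat.card_pos _ ⟨⟨a, h⟩⟩ _

lemma mem_pair_of_card_two {α : Type} [Finite α] {S : Set α} (h : Nat.card S = 2)
    {a c b : α} (ha : a ∈ S) (hc : c ∈ S) (hac : a ≠ c) (hb : b ∈ S) :
    b = a ∨ b = c := by
  by_contra hcon
  push_neg at hcon
  have hsub : ({a, c, b} : Set α) ⊆ S := by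
    intro x hx
    rcases hx with rfl | rfl | rfl <;> simpa
  have h3 : ({a, c, b} : Set α).ncard = 3 :=
    Set.ncard_eq_three.mpr ⟨a, c, b, hac, hcon.1.symm, hcon.2.symm, rfl⟩
  have hle := Set.ncard_le_ncard hsub (Set.toFinite S)
  rw [Nat.card_coe_set_eq] at h
  omega

lemma nonempty_of_card_ne_zero {α : Type} {S : Set α} (h : Nat.card S ≠ 0) : ∃ a, a ∈ S := by
  have := Nat.card_ne_zero.mp h
  obtain ⟨⟨a, ha⟩⟩ := this.1
  exact ⟨a, ha⟩

end StmtTenHelpers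

set_option maxHeartbeats 1000000 in
/-- if a finite undirected labelled graph of dimension 3 satisfies
φ₁, φ₂, φ₃ and φ₄, then the gadgetised-edge relation on its `P₁`-nodes is a strict linear
order and the graph is isomorphic to its gadgetisation. -/
theorem stmt10 {V : Type} [Fintype V] (E : V → V → Prop) (lab : V → Fin 3 → Bool)
    (hsym : ∀ u v, E u v → E v u) (hirr : ∀ v, ¬ E v v)
    (h1 : phi1 lab) (h2 : phi2 E lab) (h3 : phi3 E lab) (h4 : phi4 E lab) :
    IsStrictLinearOrderRel
        (fun u z : {v : V // lab v 0 = true} => GadEdge E lab u.val z.val) ∧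
      IsoLabGraph E lab
        (gadAdj (fun u z : {v : V // lab v 0 = true} => GadEdge E lab u.val z.val))
        (gadLab (fun u z : {v : V // lab v 0 = true} => GadEdge E lab u.val z.val)) := by
  classical
  -- basic facts from phi1
  have lab1f : ∀ x, lab x 1 = true → lab x 0 = false ∧ lab x 2 = false := by
    intro x hx; rcases h1 x with h | h | h <;> simp_all
  have lab2f : ∀ x, lab x 2 = true → lab x 0 = false ∧ lab x 1 = false := by
    intro x hx; rcases h1 x with h | h | h <;> simp_all
  have lab0f : ∀ x, lab x 0 = true → lab x 1 = false ∧ lab x 2 = false := by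
    intro x hx; rcases h1 x with h | h | h <;> simp_all
  -- unique neighbours from phi2
  have ex2a : ∀ w, lab w 1 = true →
      ∃ u, (E w u ∧ lab u 0 = true) ∧ ∀ b, E w b → lab b 0 = true → b = u := by
    intro w hw
    obtain ⟨a, ha, hu⟩ := card_one_unique (h2.1 w hw).2.1
    exact ⟨a, ha, fun b hb hb0 => hu b ⟨hb, hb0⟩⟩
  choose U2 hU2 hU2u using ex2a
  have ex2c : ∀ w, lab w 1 = true →
      ∃ v, (E w v ∧ lab v 2 = true) ∧ ∀ b, E w b → lab b 2 = true → b = v := by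
    intro w hw
    obtain ⟨a, ha, hu⟩ := card_one_unique (h2.1 w hw).2.2
    exact ⟨a, ha, fun b hb hb0 => hu b ⟨hb, hb0⟩⟩
  choose V2 hV2 hV2u using ex2c
  have ex3a : ∀ v, lab v 2 = true →
      ∃ z, (E v z ∧ lab z 0 = true) ∧ ∀ b, E v b → lab b 0 = true → b = z := by
    intro v hv
    obtain ⟨a, ha, hu⟩ := card_one_unique (h2.2.1 v hv).2.1
    exact ⟨a, ha, fun b hb hb0 => hu b ⟨hb, hb0⟩⟩
  choose Z3 hZ3 hZ3u using ex3a
  have ex3b : ∀ v, lab v 2 = true →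
      ∃ w, (E v w ∧ lab w 1 = true) ∧ ∀ b, E v b → lab b 1 = true → b = w := by
    intro v hv
    obtain ⟨a, ha, hu⟩ := card_one_unique (h2.2.1 v hv).2.2
    exact ⟨a, ha, fun b hb hb0 => hu b ⟨hb, hb0⟩⟩
  choose W3 hW3 hW3u using ex3b
  -- canonical gadget paths
  have path2 : ∀ w (hw : lab w 1 = true),
      GadPath E lab (U2 w hw) w (V2 w hw) (Z3 (V2 w hw) (hV2 w hw).2) := by
    intro w hw
    exact ⟨(hU2 w hw).2, hw, (hV2 w hw).2, (hZ3 _ _).2,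
      hsym _ _ (hU2 w hw).1, (hV2 w hw).1, (hZ3 _ _).1⟩
  have path3 : ∀ v (hv : lab v 2 = true),
      GadPath E lab (U2 (W3 v hv) (hW3 v hv).2) (W3 v hv) v (Z3 v hv) := by
    intro v hv
    exact ⟨(hU2 _ _).2, (hW3 v hv).2, hv, (hZ3 v hv).2,
      hsym _ _ (hU2 _ _).1, hsym _ _ (hW3 v hv).1, (hZ3 v hv).1⟩
  -- irreflexivity from phi4
  have gadIrr : ∀ x, ¬ GadEdge E lab x x := fun x hx => h4 ⟨x, x, x, hx, hx, hx⟩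
  -- key consequences of phi3
  have key : ∀ u z, lab u 0 = true → lab z 0 = true → u ≠ z →
      (¬ (GadEdge E lab u z ∧ GadEdge E lab z u)) ∧
      (GadEdge E lab u z ∨ GadEdge E lab z u) ∧
      (∀ w v w' v', GadPath E lab u w v z → GadPath E lab u w' v' z →
        w = w' ∧ v = v') := by
    intro u z hu hz hne
    have hsum := h3 u z hu hz hne
    refine ⟨?_, ?_, ?_⟩
    · rintro ⟨⟨w, v, hwv⟩, ⟨w', v', hwv'⟩⟩
      have h1' := card_pos_of_mem
        (S := {p : V × V | GadPath E lab u p.1 p.2 z}) (a := (w, v)) hwv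
      have h2' := card_pos_of_mem
        (S := {p : V × V | GadPath E lab z p.1 p.2 u}) (a := (w', v')) hwv'
      omega
    · by_contra hcon
      push_neg at hcon
      have hS : Nat.card {p : V × V | GadPath E lab u p.1 p.2 z} = 0 := by
        by_contra h
        obtain ⟨⟨w, v⟩, hm⟩ := nonempty_of_card_ne_zero h
        exact hcon.1 ⟨w, v, hm⟩
      have hT : Nat.card {p : V × V | GadPath E lab z p.1 p.2 u} = 0 := by
        by_contra h
        obtain ⟨⟨w, v⟩, hm⟩ := nonempty_of_card_ne_zero h
        exact hcon.2 ⟨w, v, hm⟩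
      omega
    · intro w v w' v' hp hp'
      have hpos := card_pos_of_mem
        (S := {p : V × V | GadPath E lab u p.1 p.2 z}) (a := (w, v)) hp
      have hS : Nat.card {p : V × V | GadPath E lab u p.1 p.2 z} = 1 := by omega
      obtain ⟨a, ha, hall⟩ := card_one_unique hS
      have e1 := hall (w, v) hp
      have e2 := hall (w', v') hp'
      have e3 : (w, v) = (w', v') := e1.trans e2.symm
      exact ⟨congrArg Prod.fst e3, congrArg Prod.snd e3⟩
  have path_ne : ∀ {u w v z}, GadPath E lab u w v z → u ≠ z := by
    rintro u w v z hp rfl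
    exact gadIrr u ⟨w, v, hp⟩
  have pathUniq : ∀ {u z w v w' v'}, GadPath E lab u w v z → GadPath E lab u w' v' z →
      w = w' ∧ v = v' := by
    intro u z w v w' v' hp hp'
    exact (key u z hp.1 hp.2.2.2.1 (path_ne hp)).2.2 w v w' v' hp hp'
  -- part 1 : strict linear order
  have part1 : IsStrictLinearOrderRel
      (fun u z : {v : V // lab v 0 = true} => GadEdge E lab u.val z.val) := by
    refine ⟨fun v hv => gadIrr v.val hv, ?_, ?_⟩
    · rintro ⟨u, hu⟩ ⟨v, hv⟩ ⟨w, hw⟩ huv hvw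
      simp only at huv hvw ⊢
      have hne_uv : u ≠ v := fun h => gadIrr u (h ▸ huv)
      have hne_uw : u ≠ w := by
        rintro rfl
        exact (key u v hu hv hne_uv).1 ⟨huv, hvw⟩
      rcases (key u w hu hw hne_uw).2.1 with h | h
      · exact h
      · exact absurd ⟨u, v, w, huv, hvw, h⟩ h4
    · rintro ⟨u, hu⟩ ⟨z, hz⟩ hne
      exact (key u z hu hz (fun h => hne (Subtype.ext h))).2.1
  -- consistency of the chosen neighbours
  have cons23 : ∀ w (hw : lab w 1 = true), W3 (V2 w hw) (hV2 w hw).2 = w :=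
    fun w hw => (hW3u (V2 w hw) (hV2 w hw).2 w (hsym _ _ (hV2 w hw).1) hw).symm
  have cons32 : ∀ v (hv : lab v 2 = true), V2 (W3 v hv) (hW3 v hv).2 = v :=
    fun v hv => (hV2u (W3 v hv) (hW3 v hv).2 v (hsym _ _ (hW3 v hv).1) hv).symm
  -- congruence lemmas
  have U2congr : ∀ {w w'} (hw : lab w 1 = true) (hw' : lab w' 1 = true),
      w = w' → U2 w hw = U2 w' hw' := by rintro w w' hw hw' rfl; rfl
  have V2congr : ∀ {w w'} (hw : lab w 1 = true) (hw' : lab w' 1 = true),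
      w = w' → V2 w hw = V2 w' hw' := by rintro w w' hw hw' rfl; rfl
  have W3congr : ∀ {v v'} (hv : lab v 2 = true) (hv' : lab v' 2 = true),
      v = v' → W3 v hv = W3 v' hv' := by rintro v v' hv hv' rfl; rfl
  have Z3congr : ∀ {v v'} (hv : lab v 2 = true) (hv' : lab v' 2 = true),
      v = v' → Z3 v hv = Z3 v' hv' := by rintro v v' hv hv' rfl; rfl
  -- no adjacent same-label nodes of types 2 and 3
  have no22 : ∀ a b, lab a 1 = true → lab b 1 = true → ¬ E a b := by
    intro a b ha hb hE
    have hne : U2 a ha ≠ V2 a ha := by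
      intro h
      have h0 := (hU2 a ha).2
      rw [h, (lab2f _ (hV2 a ha).2).1] at h0
      exact Bool.false_ne_true h0
    rcases mem_pair_of_card_two (h2.1 a ha).1
        (show U2 a ha ∈ {x | E a x} from (hU2 a ha).1)
        (show V2 a ha ∈ {x | E a x} from (hV2 a ha).1) hne
        (show b ∈ {x | E a x} from hE) with h | h
    · have hb0 := (hU2 a ha).2
      rw [← h] at hb0
      rw [(lab0f _ hb0).1] at hb
      exact Bool.false_ne_true hb
    · have hb2 := (hV2 a ha).2
      rw [← h] at hb2
      rw [(lab2f _ hb2).2] at hb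
      exact Bool.false_ne_true hb
  have no33 : ∀ a b, lab a 2 = true → lab b 2 = true → ¬ E a b := by
    intro a b ha hb hE
    have hne : Z3 a ha ≠ W3 a ha := by
      intro h
      have h0 := (hZ3 a ha).2
      rw [h, (lab1f _ (hW3 a ha).2).1] at h0
      exact Bool.false_ne_true h0
    rcases mem_pair_of_card_two (h2.2.1 a ha).1
        (show Z3 a ha ∈ {x | E a x} from (hZ3 a ha).1)
        (show W3 a ha ∈ {x | E a x} from (hW3 a ha).1) hne
        (show b ∈ {x | E a x} from hE) with h | h
    · have hb0 := (hZ3 a ha).2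
      rw [← h] at hb0
      rw [(lab0f _ hb0).2] at hb
      exact Bool.false_ne_true hb
    · have hb1 := (hW3 a ha).2
      rw [← h] at hb1
      rw [(lab1f _ hb1).2] at hb
      exact Bool.false_ne_true hb
  refine ⟨part1, ?_⟩
  set R := fun u z : {v : V // lab v 0 = true} => GadEdge E lab u.val z.val with hR
  have hlab2 : ∀ x, ¬ lab x 0 = true → ¬ lab x 1 = true → lab x 2 = true := by
    intro x h0 hx1
    rcases h1 x with h | h | h
    · exact absurd h.1 h0
    · exact absurd h.2.1 hx1
    · exact h.2.2
  obtain ⟨f, hfdef⟩ : ∃ f : V → ({v : V // lab v 0 = true} ⊕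
      ({p : {v : V // lab v 0 = true} × {v : V // lab v 0 = true} // R p.1 p.2} × Bool)),
      ∀ x, f x =
      if h0 : lab x 0 = true then Sum.inl ⟨x, h0⟩
      else if hx1 : lab x 1 = true then
        Sum.inr (⟨(⟨U2 x hx1, (hU2 x hx1).2⟩,
          ⟨Z3 (V2 x hx1) (hV2 x hx1).2, (hZ3 _ _).2⟩),
          ⟨x, V2 x hx1, path2 x hx1⟩⟩, false)
      else
        Sum.inr (⟨(⟨U2 (W3 x (hlab2 x h0 hx1)) (hW3 x (hlab2 x h0 hx1)).2, (hU2 _ _).2⟩,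
          ⟨Z3 x (hlab2 x h0 hx1), (hZ3 _ _).2⟩),
          ⟨W3 x (hlab2 x h0 hx1), x, path3 x (hlab2 x h0 hx1)⟩⟩, true) :=
    ⟨_, fun x => rfl⟩
  have hf0 : ∀ x (h0 : lab x 0 = true), f x = Sum.inl ⟨x, h0⟩ := by
    intro x h0
    rw [hfdef x, dif_pos h0]
  have hf1 : ∀ x (hx1 : lab x 1 = true), f x =
      Sum.inr (⟨(⟨U2 x hx1, (hU2 x hx1).2⟩,
        ⟨Z3 (V2 x hx1) (hV2 x hx1).2, (hZ3 _ _).2⟩),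
        ⟨x, V2 x hx1, path2 x hx1⟩⟩, false) := by
    intro x hx1
    have h0 : ¬ lab x 0 = true := by simp [(lab1f x hx1).1]
    rw [hfdef x, dif_neg h0, dif_pos hx1]
  have hf2 : ∀ x (hx2 : lab x 2 = true), f x =
      Sum.inr (⟨(⟨U2 (W3 x hx2) (hW3 x hx2).2, (hU2 _ _).2⟩,
        ⟨Z3 x hx2, (hZ3 _ _).2⟩),
        ⟨W3 x hx2, x, path3 x hx2⟩⟩, true) := by
    intro x hx2
    have h0 : ¬ lab x 0 = true := by simp [(lab2f x hx2).1]
    have hx1 : ¬ lab x 1 = true := by simp [(lab2f x hx2).2]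
    rw [hfdef x, dif_neg h0, dif_neg hx1]
  -- injectivity
  have hinj : Function.Injective f := by
    intro a b hab
    rcases h1 a with ⟨ha0, ha1, ha2⟩ | ⟨ha0, ha1, ha2⟩ | ⟨ha0, ha1, ha2⟩ <;>
      rcases h1 b with ⟨hb0, hb1, hb2⟩ | ⟨hb0, hb1, hb2⟩ | ⟨hb0, hb1, hb2⟩
    · rw [hf0 a ha0, hf0 b hb0] at hab
      exact congrArg Subtype.val (Sum.inl.inj hab)
    · rw [hf0 a ha0, hf1 b hb1] at hab; simp at hab
    · rw [hf0 a ha0, hf2 b hb2] at hab; simp at hab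
    · rw [hf1 a ha1, hf0 b hb0] at hab; simp at hab
    · rw [hf1 a ha1, hf1 b hb1] at hab
      simp only [Sum.inr.injEq, Prod.mk.injEq, Subtype.ext_iff, Subtype.mk.injEq, and_true] at hab
      obtain ⟨hu, hz⟩ := hab
      have hp := path2 a ha1
      have hp' := path2 b hb1
      rw [← hu, ← hz] at hp'
      exact (pathUniq hp hp').1
    · rw [hf1 a ha1, hf2 b hb2] at hab; simp at hab
    · rw [hf2 a ha2, hf0 b hb0] at hab; simp at hab
    · rw [hf2 a ha2, hf1 b hb1] at hab; simp at hab
    · rw [hf2 a ha2, hf2 b hb2] at hab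
      simp only [Sum.inr.injEq, Prod.mk.injEq, Subtype.ext_iff, Subtype.mk.injEq, and_true] at hab
      obtain ⟨hu, hz⟩ := hab
      have hp := path3 a ha2
      have hp' := path3 b hb2
      rw [← hu, ← hz] at hp'
      exact (pathUniq hp hp').2
  -- surjectivity
  have hsurj : Function.Surjective f := by
    rintro (⟨u, hu⟩ | ⟨⟨⟨⟨u, hu⟩, ⟨z, hz⟩⟩, he⟩, b⟩)
    · exact ⟨u, hf0 u hu⟩
    · obtain ⟨w, v, hp⟩ := he
      have hw1 : lab w 1 = true := hp.2.1
      have hv2 : lab v 2 = true := hp.2.2.1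
      cases b
      · refine ⟨w, ?_⟩
        rw [hf1 w hw1]
        have hu' : u = U2 w hw1 := hU2u w hw1 u (hsym _ _ hp.2.2.2.2.1) hp.1
        have hv' : v = V2 w hw1 := hV2u w hw1 v hp.2.2.2.2.2.1 hv2
        have hEz : E (V2 w hw1) z := hv' ▸ hp.2.2.2.2.2.2
        have hz' : z = Z3 (V2 w hw1) (hV2 w hw1).2 := hZ3u _ _ z hEz hz
        simp only [Sum.inr.injEq, Prod.mk.injEq, Subtype.ext_iff, Subtype.mk.injEq]
        exact ⟨⟨hu'.symm, hz'.symm⟩, trivial⟩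
      · refine ⟨v, ?_⟩
        rw [hf2 v hv2]
        have hw' : w = W3 v hv2 := hW3u v hv2 w (hsym _ _ hp.2.2.2.2.2.1) hw1
        have hEu : E (W3 v hv2) u := hw' ▸ (hsym _ _ hp.2.2.2.2.1)
        have hu' : u = U2 (W3 v hv2) (hW3 v hv2).2 := hU2u _ _ u hEu hp.1
        have hz' : z = Z3 v hv2 := hZ3u v hv2 z hp.2.2.2.2.2.2 hz
        simp only [Sum.inr.injEq, Prod.mk.injEq, Subtype.ext_iff, Subtype.mk.injEq]
        exact ⟨⟨hu'.symm, hz'.symm⟩, trivial⟩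
  -- the key 2-3 adjacency characterisation
  have key23 : ∀ a b (ha1 : lab a 1 = true) (hb2 : lab b 2 = true),
      E a b ↔ (U2 a ha1 = U2 (W3 b hb2) (hW3 b hb2).2 ∧
        Z3 (V2 a ha1) (hV2 a ha1).2 = Z3 b hb2) := by
    intro a b ha1 hb2
    constructor
    · intro h
      have hv' : b = V2 a ha1 := hV2u a ha1 b h hb2
      have h1' : W3 b hb2 = a := (W3congr hb2 (hV2 a ha1).2 hv').trans (cons23 a ha1)
      exact ⟨U2congr ha1 (hW3 b hb2).2 h1'.symm, Z3congr (hV2 a ha1).2 hb2 hv'.symm⟩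
    · rintro ⟨hU, hZ⟩
      have hp := path2 a ha1
      have hp' := path3 b hb2
      rw [← hU, ← hZ] at hp'
      have := (pathUniq hp hp').2
      have hE := (hV2 a ha1).1
      rw [this] at hE
      exact hE
  -- edge preservation
  have hiff : ∀ a b, E a b ↔ gadAdj R (f a) (f b) := by
    intro a b
    rcases h1 a with ⟨ha0, ha1, ha2⟩ | ⟨ha0, ha1, ha2⟩ | ⟨ha0, ha1, ha2⟩ <;>
      rcases h1 b with ⟨hb0, hb1, hb2⟩ | ⟨hb0, hb1, hb2⟩ | ⟨hb0, hb1, hb2⟩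
    · rw [hf0 a ha0, hf0 b hb0]
      simp only [gadAdj, iff_false]
      exact h2.2.2 a b ha0 hb0
    · rw [hf0 a ha0, hf1 b hb1]
      simp only [gadAdj, Subtype.mk.injEq, Bool.false_eq_true, Bool.true_eq_false, false_and, and_false, or_false, false_or, true_and, and_true]
      constructor
      · intro h
        exact (hU2u b hb1 a (hsym a b h) ha0).symm
      · intro h
        have := (hU2 b hb1).1
        rw [h] at this
        exact hsym _ _ this
    · rw [hf0 a ha0, hf2 b hb2]
      simp only [gadAdj, Subtype.mk.injEq, Bool.false_eq_true, Bool.true_eq_false, false_and, and_false, or_false, false_or, true_and, and_true]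
      constructor
      · intro h
        exact (hZ3u b hb2 a (hsym a b h) ha0).symm
      · intro h
        have := (hZ3 b hb2).1
        rw [h] at this
        exact hsym _ _ this
    · rw [hf1 a ha1, hf0 b hb0]
      simp only [gadAdj, Subtype.mk.injEq, Bool.false_eq_true, Bool.true_eq_false, false_and, and_false, or_false, false_or, true_and, and_true]
      constructor
      · intro h
        exact (hU2u a ha1 b h hb0).symm
      · intro h
        have := (hU2 a ha1).1
        rw [h] at this
        exact this
    · rw [hf1 a ha1, hf1 b hb1]
      simp only [gadAdj, ne_eq, not_true_eq_false, and_false, iff_false]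
      exact no22 a b ha1 hb1
    · rw [hf1 a ha1, hf2 b hb2]
      simp only [gadAdj, ne_eq, Bool.false_eq_true, not_false_eq_true, and_true,
        Subtype.ext_iff, Subtype.mk.injEq, Prod.mk.injEq]
      exact key23 a b ha1 hb2
    · rw [hf2 a ha2, hf0 b hb0]
      simp only [gadAdj, Subtype.mk.injEq, Bool.false_eq_true, Bool.true_eq_false, false_and, and_false, or_false, false_or, true_and, and_true]
      constructor
      · intro h
        exact (hZ3u a ha2 b h hb0).symm
      · intro h
        have := (hZ3 a ha2).1
        rw [h] at this
        exact this
    · rw [hf2 a ha2, hf1 b hb1]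
      simp only [gadAdj, ne_eq, Bool.true_eq_false, not_false_eq_true, and_true,
        Subtype.ext_iff, Subtype.mk.injEq, Prod.mk.injEq]
      rw [show (E a b ↔ _) from ⟨hsym a b, hsym b a⟩]
      rw [key23 b a hb1 ha2]
      constructor
      · rintro ⟨h1', h2'⟩; exact ⟨h1'.symm, h2'.symm⟩
      · rintro ⟨h1', h2'⟩; exact ⟨h1'.symm, h2'.symm⟩
    · rw [hf2 a ha2, hf2 b hb2]
      simp only [gadAdj, ne_eq, not_true_eq_false, and_false, iff_false]
      exact no33 a b ha2 hb2
  -- label preservation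
  have hlabp : ∀ x, lab x = gadLab R (f x) := by
    intro x
    rcases h1 x with ⟨h0, hx1, hx2⟩ | ⟨h0, hx1, hx2⟩ | ⟨h0, hx1, hx2⟩
    · rw [hf0 x h0]
      funext i
      fin_cases i <;> simp [gadLab, h0, hx1, hx2]
    · rw [hf1 x hx1]
      funext i
      fin_cases i <;> simp [gadLab, h0, hx1, hx2]
    · rw [hf2 x hx2]
      funext i
      fin_cases i <;> simp [gadLab, h0, hx1, hx2]
  exact ⟨Equiv.ofBijective f ⟨hinj, hsurj⟩, hiff, hlabp⟩
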